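/- Let k₀, ℓ₀, m₀ be nonnegative integers whose sum is even and which form a balanced triple, i.e. k₀ ≤ ℓ₀ + m₀, ℓ₀ ≤ k₀ + m₀ and m₀ ≤ k₀ + ℓ₀; set k₀' = (−k₀+ℓ₀+m₀)/2, ℓ₀' = (k₀−ℓ₀+m₀)/2, m₀' = (k₀+ℓ₀−m₀)/2 (nonnegative integers). In the polynomial ring ℚ[x₁,y₁,x₂,y₂,x₃,y₃], let SL₂(ℚ) act by ring automorphisms, an element γ acting by simultaneously substituting each row vector (xᵢ, yᵢ) by (xᵢ, yᵢ)·γ for i = 1, 2, 3, and set P := (x₂y₃ − y₂x₃)^{k₀'} · (x₃y₁ − y₃x₁)^{ℓ₀'} · (x₁y₂ − y₁x₂)^{m₀'}. Then a polynomial Q ∈ ℚ[x₁,y₁,x₂,y₂,x₃,y₃] that is tri-homogeneous of tridegree (k₀, ℓ₀, m₀) — meaning every monomial of Q has total degree k₀ in the variables (x₁,y₁), total degree ℓ₀ in (x₂,y₂), and total degree m₀ in (x₃,y₃) — is invariant under this SL₂(ℚ)-action if and only if Q is a scalar multiple of P. In particular, the ℚ-vector space of SL₂(ℚ)-invariant tri-homogeneous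 polynomials of tridegree (k₀, ℓ₀, m₀) is one-dimensional, spanned by P. -/

import Mathlib

open MvPolynomial

/-- The substitution attached to `γ ∈ M₂(ℚ)`: acting on `ℚ[x₁,y₁,x₂,y₂,x₃,y₃]`
(variables indexed `0,…,5` as `x₁,y₁,x₂,y₂,x₃,y₃`) by replacing each row vector
`(xᵢ, yᵢ)` by `(xᵢ, yᵢ)·γ`. -/
noncomputable def sl2Subst (γ : Matrix (Fin 2) (Fin 2) ℚ) : Fin 6 → MvPolynomial (Fin 6) ℚ :=
  ![C (γ 0 0) * X 0 + C (γ 1 0) * X 1,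
    C (γ 0 1) * X 0 + C (γ 1 1) * X 1,
    C (γ 0 0) * X 2 + C (γ 1 0) * X 3,
    C (γ 0 1) * X 2 + C (γ 1 1) * X 3,
    C (γ 0 0) * X 4 + C (γ 1 0) * X 5,
    C (γ 0 1) * X 4 + C (γ 1 1) * X 5]

/-- `Q` is tri-homogeneous of tridegree `(k₀, ℓ₀, m₀)`: every monomial of `Q` has total
degree `k₀` in `(x₁,y₁)`, `ℓ₀` in `(x₂,y₂)` and `m₀` in `(x₃,y₃)`. -/
def TriHomogeneous (k₀ l₀ m₀ : ℕ) (Q : MvPolynomial (Fin 6) ℚ) : Prop :=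
  ∀ d ∈ Q.support, d 0 + d 1 = k₀ ∧ d 2 + d 3 = l₀ ∧ d 4 + d 5 = m₀

/-- The Clebsch–Gordan invariant
`P = (x₂y₃ − y₂x₃)^{k₀'} (x₃y₁ − y₃x₁)^{ℓ₀'} (x₁y₂ − y₁x₂)^{m₀'}`. -/
noncomputable def clebschGordan (k₀' l₀' m₀' : ℕ) : MvPolynomial (Fin 6) ℚ :=
  (X 2 * X 5 - X 3 * X 4) ^ k₀' * (X 4 * X 1 - X 5 * X 0) ^ l₀' *
    (X 0 * X 3 - X 1 * X 2) ^ m₀'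

/-! ### Auxiliary evaluation lemmas -/

@[simp] lemma CG.cons_val_five {α : Type*} (a b c d e f : α) :
    (![a, b, c, d, e, f] : Fin 6 → α) 5 = f := rfl

lemma CG.aeval_eq_eval' (v : Fin 6 → ℚ) (p : MvPolynomial (Fin 6) ℚ) :
    (MvPolynomial.aeval v : MvPolynomial (Fin 6) ℚ →ₐ[ℚ] ℚ) p = eval v p := rfl

lemma CG.eval_aeval6 (f : Fin 6 → MvPolynomial (Fin 6) ℚ) (v : Fin 6 → ℚ)
    (Q : MvPolynomial (Fin 6) ℚ) :
    eval v (aeval f Q) = eval (fun i => eval v (f i)) Q := by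
  have h := comp_aeval_apply (R := ℚ)
    (φ := (MvPolynomial.aeval v : MvPolynomial (Fin 6) ℚ →ₐ[ℚ] ℚ)) (f := f) Q
  simpa only [CG.aeval_eq_eval'] using h

lemma CG.polyaeval_eq_eval' (s : ℚ) (p : Polynomial ℚ) :
    (Polynomial.aeval s : Polynomial ℚ →ₐ[ℚ] ℚ) p = Polynomial.eval s p := by
  rw [Polynomial.coe_aeval_eq_eval]

lemma CG.polyeval_aeval6 (g : Fin 6 → Polynomial ℚ) (s : ℚ) (Q : MvPolynomial (Fin 6) ℚ) :
    Polynomial.eval s (aeval g Q) = eval (fun i => Polynomial.eval s (g i)) Q := by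
  have h := comp_aeval_apply (R := ℚ) (φ := (Polynomial.aeval s : Polynomial ℚ →ₐ[ℚ] ℚ)) (f := g) Q
  simp only [CG.polyaeval_eq_eval'] at h
  rw [h, CG.aeval_eq_eval']

lemma CG.eval_sl2 (g : Matrix (Fin 2) (Fin 2) ℚ) (v : Fin 6 → ℚ) (Q : MvPolynomial (Fin 6) ℚ) :
    eval v (aeval (sl2Subst g) Q) =
      eval ![g 0 0 * v 0 + g 1 0 * v 1, g 0 1 * v 0 + g 1 1 * v 1,
            g 0 0 * v 2 + g 1 0 * v 3, g 0 1 * v 2 + g 1 1 * v 3,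
            g 0 0 * v 4 + g 1 0 * v 5, g 0 1 * v 4 + g 1 1 * v 5] Q := by
  rw [CG.eval_aeval6]
  have hfun : (fun i => eval v (sl2Subst g i)) =
      ![g 0 0 * v 0 + g 1 0 * v 1, g 0 1 * v 0 + g 1 1 * v 1,
        g 0 0 * v 2 + g 1 0 * v 3, g 0 1 * v 2 + g 1 1 * v 3,
        g 0 0 * v 4 + g 1 0 * v 5, g 0 1 * v 4 + g 1 1 * v 5] := by
    funext i
    fin_cases i <;> · show eval v _ = _ ; simp [sl2Subst]
  rw [hfun]

/-! ### Scaling for tri-homogeneous polynomials -/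

lemma CG.triHom_scale {k l m : ℕ} {Q : MvPolynomial (Fin 6) ℚ} (hQ : TriHomogeneous k l m Q)
    (t₁ t₂ t₃ : ℚ) (v : Fin 6 → ℚ) :
    eval (fun i => ![t₁, t₁, t₂, t₂, t₃, t₃] i * v i) Q = t₁ ^ k * t₂ ^ l * t₃ ^ m * eval v Q := by
  rw [eval_eq, eval_eq, Finset.mul_sum]
  refine Finset.sum_congr rfl fun d hd => ?_
  obtain ⟨h1, h2, h3⟩ := hQ d hd
  rw [← h1, ← h2, ← h3]
  have ext : ∀ (w : Fin 6 → ℚ), ∏ i ∈ d.support, w i ^ d i = ∏ i : Fin 6, w i ^ d i := fun w =>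
    Finset.prod_subset (Finset.subset_univ _)
      (fun i _ hi => by rw [Finsupp.notMem_support_iff.mp hi, pow_zero])
  rw [ext, ext, Fin.prod_univ_six, Fin.prod_univ_six]
  show coeff d Q * ((t₁ * v 0) ^ d 0 * (t₁ * v 1) ^ d 1 * (t₂ * v 2) ^ d 2 * (t₂ * v 3) ^ d 3 *
      (t₃ * v 4) ^ d 4 * (t₃ * v 5) ^ d 5) = _
  ring

lemma CG.triHom_scale' {k l m : ℕ} {Q : MvPolynomial (Fin 6) ℚ} (hQ : TriHomogeneous k l m Q)
    (t₁ t₂ t₃ a₀ a₁ a₂ a₃ a₄ a₅ : ℚ) :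
    eval ![t₁ * a₀, t₁ * a₁, t₂ * a₂, t₂ * a₃, t₃ * a₄, t₃ * a₅] Q =
      t₁ ^ k * t₂ ^ l * t₃ ^ m * eval ![a₀, a₁, a₂, a₃, a₄, a₅] Q := by
  have h := CG.triHom_scale hQ t₁ t₂ t₃ ![a₀, a₁, a₂, a₃, a₄, a₅]
  rw [← h]
  have hfun : (fun i => ![t₁, t₁, t₂, t₂, t₃, t₃] i * ![a₀, a₁, a₂, a₃, a₄, a₅] i) =
      ![t₁ * a₀, t₁ * a₁, t₂ * a₂, t₂ * a₃, t₃ * a₄, t₃ * a₅] := by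
    funext i
    fin_cases i <;> simp
  rw [hfun]

/-! ### Tri-homogeneity of the Clebsch–Gordan invariant -/

private def w1 : Fin 6 → ℕ := fun i => if i.val < 2 then 1 else 0
private def w2 : Fin 6 → ℕ := fun i => if 2 ≤ i.val ∧ i.val < 4 then 1 else 0
private def w3 : Fin 6 → ℕ := fun i => if 4 ≤ i.val then 1 else 0

lemma CG.weight_w (w : Fin 6 → ℕ) (d : Fin 6 →₀ ℕ) :
    (Finsupp.weight w) d = ∑ i : Fin 6, d i * w i := by
  rw [Finsupp.weight_apply, Finsupp.sum_fintype]
  · simp [smul_eq_mul]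
  · intro i; simp

lemma CG.IsWH_sub {w : Fin 6 → ℕ} {p q : MvPolynomial (Fin 6) ℚ} {n : ℕ}
    (hp : IsWeightedHomogeneous w p n) (hq : IsWeightedHomogeneous w q n) :
    IsWeightedHomogeneous w (p - q) n := by
  have := (weightedHomogeneousSubmodule ℚ w n).sub_mem
    ((mem_weightedHomogeneousSubmodule _ _ _ _).2 hp)
    ((mem_weightedHomogeneousSubmodule _ _ _ _).2 hq)
  exact (mem_weightedHomogeneousSubmodule _ _ _ _).1 this

lemma CG.IsWH_pow {w : Fin 6 → ℕ} {p : MvPolynomial (Fin 6) ℚ} {n : ℕ}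
    (hp : IsWeightedHomogeneous w p n) (e : ℕ) :
    IsWeightedHomogeneous w (p ^ e) (e * n) := by
  induction e with
  | zero => simpa using isWeightedHomogeneous_one ℚ w
  | succ e ih => rw [pow_succ, Nat.succ_mul]; exact ih.mul hp

lemma CG.cg_WH (w : Fin 6 → ℕ) (k' l' m' : ℕ) (e1 : w 3 + w 4 = w 2 + w 5)
    (e2 : w 5 + w 0 = w 4 + w 1) (e3 : w 1 + w 2 = w 0 + w 3) :
    IsWeightedHomogeneous w (clebschGordan k' l' m')
      (k' * (w 2 + w 5) + l' * (w 4 + w 1) + m' * (w 0 + w 3)) := by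
  have hX : ∀ i j : Fin 6, IsWeightedHomogeneous w ((X i * X j : MvPolynomial (Fin 6) ℚ)) (w i + w j) :=
    fun i j => (isWeightedHomogeneous_X ℚ w i).mul (isWeightedHomogeneous_X ℚ w j)
  have h1 := CG.IsWH_pow (CG.IsWH_sub (hX 2 5) (e1 ▸ hX 3 4)) k'
  have h2 := CG.IsWH_pow (CG.IsWH_sub (hX 4 1) (e2 ▸ hX 5 0)) l'
  have h3 := CG.IsWH_pow (CG.IsWH_sub (hX 0 3) (e3 ▸ hX 1 2)) m'
  exact (h1.mul h2).mul h3

lemma CG.cg_triHom (k l m k' l' m' : ℕ) (h1 : l' + m' = k) (h2 : k' + m' = l) (h3 : k' + l' = m) :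
    TriHomogeneous k l m (clebschGordan k' l' m') := by
  intro d hd
  have hc : coeff d (clebschGordan k' l' m') ≠ 0 := (mem_support_iff).1 hd
  have c0 : ((0:Fin 6):ℕ) = 0 := rfl
  have c1 : ((1:Fin 6):ℕ) = 1 := rfl
  have c2 : ((2:Fin 6):ℕ) = 2 := rfl
  have c3 : ((3:Fin 6):ℕ) = 3 := rfl
  have c4 : ((4:Fin 6):ℕ) = 4 := rfl
  have c5 : ((5:Fin 6):ℕ) = 5 := rfl
  have H1 := CG.cg_WH w1 k' l' m' (by norm_num [w1, c2, c3, c4, c5])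
    (by norm_num [w1, c0, c1, c4, c5]) (by norm_num [w1, c0, c1, c2, c3]) hc
  have H2 := CG.cg_WH w2 k' l' m' (by norm_num [w2, c2, c3, c4, c5])
    (by norm_num [w2, c0, c1, c4, c5]) (by norm_num [w2, c0, c1, c2, c3]) hc
  have H3 := CG.cg_WH w3 k' l' m' (by norm_num [w3, c2, c3, c4, c5])
    (by norm_num [w3, c0, c1, c4, c5]) (by norm_num [w3, c0, c1, c2, c3]) hc
  rw [CG.weight_w] at H1 H2 H3
  rw [Fin.sum_univ_six] at H1 H2 H3
  norm_num [w1, w2, w3, c0, c1, c2, c3, c4, c5] at H1 H2 H3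
  refine ⟨?_, ?_, ?_⟩ <;> omega

/-! ### Invariance of the Clebsch–Gordan polynomial -/

lemma CG.cg_invariant (k' l' m' : ℕ) (γ : Matrix.SpecialLinearGroup (Fin 2) ℚ) :
    aeval (sl2Subst (γ : Matrix (Fin 2) (Fin 2) ℚ)) (clebschGordan k' l' m') =
      clebschGordan k' l' m' := by
  have hdet : ((γ : Matrix (Fin 2) (Fin 2) ℚ) 0 0) * ((γ : Matrix (Fin 2) (Fin 2) ℚ) 1 1)
      - ((γ : Matrix (Fin 2) (Fin 2) ℚ) 0 1) * ((γ : Matrix (Fin 2) (Fin 2) ℚ) 1 0) = 1 := by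
    have := γ.property
    rwa [Matrix.det_fin_two] at this
  set g := (γ : Matrix (Fin 2) (Fin 2) ℚ)
  have hC : (C (g 0 0) * C (g 1 1) - C (g 0 1) * C (g 1 0) : MvPolynomial (Fin 6) ℚ) = 1 := by
    rw [← C_mul, ← C_mul, ← C_sub, hdet, C_1]
  have b1 : aeval (sl2Subst g) ((X 2 * X 5 - X 3 * X 4 : MvPolynomial (Fin 6) ℚ))
      = X 2 * X 5 - X 3 * X 4 := by
    simp only [map_sub, map_mul, aeval_X, sl2Subst]
    show (C (g 0 0) * X 2 + C (g 1 0) * X 3) * (C (g 0 1) * X 4 + C (g 1 1) * X 5)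
        - (C (g 0 1) * X 2 + C (g 1 1) * X 3) * (C (g 0 0) * X 4 + C (g 1 0) * X 5) = _
    linear_combination (X 2 * X 5 - X 3 * X 4 : MvPolynomial (Fin 6) ℚ) * hC
  have b2 : aeval (sl2Subst g) ((X 4 * X 1 - X 5 * X 0 : MvPolynomial (Fin 6) ℚ))
      = X 4 * X 1 - X 5 * X 0 := by
    simp only [map_sub, map_mul, aeval_X, sl2Subst]
    show (C (g 0 0) * X 4 + C (g 1 0) * X 5) * (C (g 0 1) * X 0 + C (g 1 1) * X 1)
        - (C (g 0 1) * X 4 + C (g 1 1) * X 5) * (C (g 0 0) * X 0 + C (g 1 0) * X 1) = _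
    linear_combination (X 4 * X 1 - X 5 * X 0 : MvPolynomial (Fin 6) ℚ) * hC
  have b3 : aeval (sl2Subst g) ((X 0 * X 3 - X 1 * X 2 : MvPolynomial (Fin 6) ℚ))
      = X 0 * X 3 - X 1 * X 2 := by
    simp only [map_sub, map_mul, aeval_X, sl2Subst]
    show (C (g 0 0) * X 0 + C (g 1 0) * X 1) * (C (g 0 1) * X 2 + C (g 1 1) * X 3)
        - (C (g 0 1) * X 0 + C (g 1 1) * X 1) * (C (g 0 0) * X 2 + C (g 1 0) * X 3) = _
    linear_combination (X 0 * X 3 - X 1 * X 2 : MvPolynomial (Fin 6) ℚ) * hC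
  rw [clebschGordan, map_mul, map_mul, map_pow, map_pow, map_pow, b1, b2, b3]


/-- Clebsch–Gordan: for a balanced triple `(k₀, ℓ₀, m₀)` with even sum, setting
`k₀' = (−k₀+ℓ₀+m₀)/2`, `ℓ₀' = (k₀−ℓ₀+m₀)/2`, `m₀' = (k₀+ℓ₀−m₀)/2`, the polynomial `P`
is tri-homogeneous of tridegree `(k₀, ℓ₀, m₀)`, and a tri-homogeneous polynomial `Q` of
that tridegree is invariant under the substitution action of `SL₂(ℚ)` if and only if it
is a scalar multiple of `P`; so the space of invariants is one-dimensional, spanned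
by `P`. -/
theorem clebsch_gordan_invariant_iff (k₀ l₀ m₀ k₀' l₀' m₀' : ℕ)
    (hk' : 2 * k₀' + k₀ = l₀ + m₀) (hl' : 2 * l₀' + l₀ = k₀ + m₀)
    (hm' : 2 * m₀' + m₀ = k₀ + l₀) :
    TriHomogeneous k₀ l₀ m₀ (clebschGordan k₀' l₀' m₀') ∧
    (∀ γ : Matrix.SpecialLinearGroup (Fin 2) ℚ,
        aeval (sl2Subst (γ : Matrix (Fin 2) (Fin 2) ℚ)) (clebschGordan k₀' l₀' m₀') =
          clebschGordan k₀' l₀' m₀') ∧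
    ∀ Q : MvPolynomial (Fin 6) ℚ, TriHomogeneous k₀ l₀ m₀ Q →
      ((∀ γ : Matrix.SpecialLinearGroup (Fin 2) ℚ,
          aeval (sl2Subst (γ : Matrix (Fin 2) (Fin 2) ℚ)) Q = Q) ↔
        ∃ c : ℚ, Q = c • clebschGordan k₀' l₀' m₀') := by
  have e1 : l₀' + m₀' = k₀ := by omega
  have e2 : k₀' + m₀' = l₀ := by omega
  have e3 : k₀' + l₀' = m₀ := by omega
  refine ⟨CG.cg_triHom _ _ _ _ _ _ e1 e2 e3, fun γ => CG.cg_invariant _ _ _ γ, ?_⟩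
  intro Q hQ
  constructor
  swap
  · rintro ⟨c, rfl⟩ γ
    rw [map_smul, CG.cg_invariant]
  intro hinv
  -- pointwise invariance
  have hpt : ∀ γ : Matrix.SpecialLinearGroup (Fin 2) ℚ, ∀ v : Fin 6 → ℚ,
      eval ![(γ : Matrix (Fin 2) (Fin 2) ℚ) 0 0 * v 0 + (γ : Matrix (Fin 2) (Fin 2) ℚ) 1 0 * v 1,
            (γ : Matrix (Fin 2) (Fin 2) ℚ) 0 1 * v 0 + (γ : Matrix (Fin 2) (Fin 2) ℚ) 1 1 * v 1,
            (γ : Matrix (Fin 2) (Fin 2) ℚ) 0 0 * v 2 + (γ : Matrix (Fin 2) (Fin 2) ℚ) 1 0 * v 3,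
            (γ : Matrix (Fin 2) (Fin 2) ℚ) 0 1 * v 2 + (γ : Matrix (Fin 2) (Fin 2) ℚ) 1 1 * v 3,
            (γ : Matrix (Fin 2) (Fin 2) ℚ) 0 0 * v 4 + (γ : Matrix (Fin 2) (Fin 2) ℚ) 1 0 * v 5,
            (γ : Matrix (Fin 2) (Fin 2) ℚ) 0 1 * v 4 + (γ : Matrix (Fin 2) (Fin 2) ℚ) 1 1 * v 5] Q
        = eval v Q := by
    intro γ v
    rw [← CG.eval_sl2, hinv γ]
  set r : ℚ → ℚ → ℚ := fun a b => eval ![1, 0, 0, 1, a, b] Q with hr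
  -- homogeneity in the third vector
  have hom3 : ∀ t a b : ℚ, r (t * a) (t * b) = t ^ m₀ * r a b := by
    intro t a b
    have h := CG.triHom_scale' hQ 1 1 t 1 0 0 1 a b
    simpa using h
  -- torus relation
  have torus : ∀ t : ℚ, t ≠ 0 → ∀ a b : ℚ, t ^ k₀ * r (t * a) (b / t) = t ^ l₀ * r a b := by
    intro t ht a b
    have hdet : Matrix.det ![![t, 0], ![0, t⁻¹]] = 1 := by
      refine (Matrix.det_fin_two _).trans ?_
      norm_num
      field_simp
    set γ : Matrix.SpecialLinearGroup (Fin 2) ℚ := ⟨![![t, 0], ![0, t⁻¹]], hdet⟩ with hγ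
    have h := hpt γ ![1, 0, 0, 1, a, b]
    have hc : (γ : Matrix (Fin 2) (Fin 2) ℚ) = ![![t, 0], ![0, t⁻¹]] := rfl
    rw [hc] at h
    have hv : (![(![![t, 0], ![0, t⁻¹]] : Matrix (Fin 2) (Fin 2) ℚ) 0 0 * (![1, 0, 0, 1, a, b] : Fin 6 → ℚ) 0 + (![![t, 0], ![0, t⁻¹]] : Matrix (Fin 2) (Fin 2) ℚ) 1 0 * (![1, 0, 0, 1, a, b] : Fin 6 → ℚ) 1,
        (![![t, 0], ![0, t⁻¹]] : Matrix (Fin 2) (Fin 2) ℚ) 0 1 * (![1, 0, 0, 1, a, b] : Fin 6 → ℚ) 0 + (![![t, 0], ![0, t⁻¹]] : Matrix (Fin 2) (Fin 2) ℚ) 1 1 * (![1, 0, 0, 1, a, b] : Fin 6 → ℚ) 1,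
        (![![t, 0], ![0, t⁻¹]] : Matrix (Fin 2) (Fin 2) ℚ) 0 0 * (![1, 0, 0, 1, a, b] : Fin 6 → ℚ) 2 + (![![t, 0], ![0, t⁻¹]] : Matrix (Fin 2) (Fin 2) ℚ) 1 0 * (![1, 0, 0, 1, a, b] : Fin 6 → ℚ) 3,
        (![![t, 0], ![0, t⁻¹]] : Matrix (Fin 2) (Fin 2) ℚ) 0 1 * (![1, 0, 0, 1, a, b] : Fin 6 → ℚ) 2 + (![![t, 0], ![0, t⁻¹]] : Matrix (Fin 2) (Fin 2) ℚ) 1 1 * (![1, 0, 0, 1, a, b] : Fin 6 → ℚ) 3,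
        (![![t, 0], ![0, t⁻¹]] : Matrix (Fin 2) (Fin 2) ℚ) 0 0 * (![1, 0, 0, 1, a, b] : Fin 6 → ℚ) 4 + (![![t, 0], ![0, t⁻¹]] : Matrix (Fin 2) (Fin 2) ℚ) 1 0 * (![1, 0, 0, 1, a, b] : Fin 6 → ℚ) 5,
        (![![t, 0], ![0, t⁻¹]] : Matrix (Fin 2) (Fin 2) ℚ) 0 1 * (![1, 0, 0, 1, a, b] : Fin 6 → ℚ) 4 + (![![t, 0], ![0, t⁻¹]] : Matrix (Fin 2) (Fin 2) ℚ) 1 1 * (![1, 0, 0, 1, a, b] : Fin 6 → ℚ) 5] : Fin 6 → ℚ)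
        = ![t * 1, t * 0, t⁻¹ * 0, t⁻¹ * 1, 1 * (t * a), 1 * (b / t)] := by
      funext i
      fin_cases i <;> · simp; try field_simp; try ring
    rw [hv] at h
    have h2 := CG.triHom_scale' hQ t t⁻¹ 1 1 0 0 1 (t * a) (b / t)
    rw [h2] at h
    have hrr : eval ![1, 0, 0, 1, t * a, b / t] Q = r (t * a) (b / t) := rfl
    rw [hrr] at h
    have hrab : eval ![1, 0, 0, 1, a, b] Q = r a b := rfl
    rw [hrab] at h
    rw [← h]
    have hl : t ^ l₀ * (t ^ k₀ * (t⁻¹) ^ l₀ * 1 ^ m₀ * r (t * a) (b / t))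
        = t ^ k₀ * ((t ^ l₀ * (t⁻¹) ^ l₀) * r (t * a) (b / t)) := by ring
    rw [hl, ← mul_pow, mul_inv_cancel₀ ht, one_pow, one_mul]
  -- squares relation
  have sq : ∀ t : ℚ, t ≠ 0 → ∀ a b : ℚ, r (t ^ 2 * a) b = t ^ (2 * k₀') * r a b := by
    intro t ht a b
    have h1 := hom3 t (t * a) (b / t)
    have e : t * (b / t) = b := by field_simp
    have e2 : t * (t * a) = t ^ 2 * a := by ring
    rw [e, e2] at h1
    have h2 := torus t ht a b
    have hcancel : t ^ k₀ * r (t ^ 2 * a) b = t ^ k₀ * (t ^ (2 * k₀') * r a b) := by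
      calc t ^ k₀ * r (t ^ 2 * a) b = t ^ k₀ * (t ^ m₀ * r (t * a) (b / t)) := by rw [h1]
      _ = t ^ m₀ * (t ^ k₀ * r (t * a) (b / t)) := by ring
      _ = t ^ m₀ * (t ^ l₀ * r a b) := by rw [h2]
      _ = t ^ (m₀ + l₀) * r a b := by rw [pow_add]; ring
      _ = t ^ (k₀ + 2 * k₀') * r a b := by rw [show m₀ + l₀ = k₀ + 2 * k₀' by omega]
      _ = t ^ k₀ * (t ^ (2 * k₀') * r a b) := by rw [pow_add]; ring
    exact mul_left_cancel₀ (pow_ne_zero _ ht) hcancel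
  -- full scaling in the first argument
  have full1 : ∀ s a b : ℚ, r (s * a) b = s ^ k₀' * r a b := by
    intro s a b
    set pol : Polynomial ℚ :=
      aeval ![1, 0, 0, 1, Polynomial.C a * Polynomial.X, Polynomial.C b] Q with hpol
    have hev : ∀ u : ℚ, pol.eval u = r (u * a) b := by
      intro u
      rw [hpol, CG.polyeval_aeval6]
      have hfun : (fun i => Polynomial.eval u
          ((![1, 0, 0, 1, Polynomial.C a * Polynomial.X, Polynomial.C b] : Fin 6 → Polynomial ℚ) i))
          = ![1, 0, 0, 1, u * a, b] := by
        funext i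
        fin_cases i
        · show Polynomial.eval u 1 = 1
          simp
        · show Polynomial.eval u 0 = 0
          simp
        · show Polynomial.eval u 0 = 0
          simp
        · show Polynomial.eval u 1 = 1
          simp
        · show Polynomial.eval u (Polynomial.C a * Polynomial.X) = u * a
          rw [Polynomial.eval_mul, Polynomial.eval_C, Polynomial.eval_X, mul_comm]
        · show Polynomial.eval u (Polynomial.C b) = b
          simp
      rw [hfun]
    set p0 : Polynomial ℚ := pol - Polynomial.C (r a b) * Polynomial.X ^ k₀' with hp0
    have hroots : ∀ n : ℕ, p0.IsRoot (((n : ℚ) + 1) ^ 2) := by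
      intro n
      have hn : ((n : ℚ) + 1) ≠ 0 := by positivity
      have hs := sq ((n : ℚ) + 1) hn a b
      show p0.eval (((n : ℚ) + 1) ^ 2) = 0
      rw [hp0, Polynomial.eval_sub, Polynomial.eval_mul, Polynomial.eval_C, Polynomial.eval_pow,
        Polynomial.eval_X, hev, hs, ← pow_mul]
      ring
    have hinj : Function.Injective (fun n : ℕ => ((n : ℚ) + 1) ^ 2) := by
      have hsm : StrictMono (fun n : ℕ => ((n : ℚ) + 1) ^ 2) := by
        intro i j hij
        have hij' : (i : ℚ) < (j : ℚ) := by exact_mod_cast hij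
        have hi : (0:ℚ) ≤ (i : ℚ) := Nat.cast_nonneg i
        simp only
        nlinarith
      exact hsm.injective
    have hz : p0 = 0 := Polynomial.eq_zero_of_infinite_isRoot _
      (Set.infinite_of_injective_forall_mem hinj hroots)
    have h0 := congrArg (Polynomial.eval s) hz
    rw [hp0, Polynomial.eval_sub, Polynomial.eval_mul, Polynomial.eval_C, Polynomial.eval_pow,
      Polynomial.eval_X, hev, Polynomial.eval_zero] at h0
    have := sub_eq_zero.mp h0
    rw [this]; ring
  -- scaling in the second argument (t ≠ 0)
  have scale2 : ∀ t : ℚ, t ≠ 0 → ∀ a b : ℚ, r a (t * b) = t ^ l₀' * r a b := by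
    intro t ht a b
    have h1 := hom3 t a b
    have h2 := full1 t a (t * b)
    have hcancel : t ^ k₀' * r a (t * b) = t ^ k₀' * (t ^ l₀' * r a b) := by
      calc t ^ k₀' * r a (t * b) = r (t * a) (t * b) := (h2).symm
      _ = t ^ m₀ * r a b := h1
      _ = t ^ (k₀' + l₀') * r a b := by rw [show m₀ = k₀' + l₀' by omega]
      _ = t ^ k₀' * (t ^ l₀' * r a b) := by rw [pow_add]; ring
    exact mul_left_cancel₀ (pow_ne_zero _ ht) hcancel
  -- full scaling in the second argument at a = 1
  have full2 : ∀ b : ℚ, r 1 b = b ^ l₀' * r 1 1 := by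
    intro b
    set pol2 : Polynomial ℚ := aeval ![1, 0, 0, 1, Polynomial.C 1, Polynomial.X] Q with hpol2
    have hev2 : ∀ u : ℚ, pol2.eval u = r 1 u := by
      intro u
      rw [hpol2, CG.polyeval_aeval6]
      have hfun : (fun i => Polynomial.eval u
          ((![1, 0, 0, 1, Polynomial.C 1, Polynomial.X] : Fin 6 → Polynomial ℚ) i))
          = ![1, 0, 0, 1, 1, u] := by
        funext i
        fin_cases i
        · show Polynomial.eval u 1 = 1
          simp
        · show Polynomial.eval u 0 = 0
          simp
        · show Polynomial.eval u 0 = 0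
          simp
        · show Polynomial.eval u 1 = 1
          simp
        · show Polynomial.eval u (Polynomial.C 1) = 1
          simp
        · show Polynomial.eval u Polynomial.X = u
          simp
      rw [hfun]
    set p1 : Polynomial ℚ := pol2 - Polynomial.C (r 1 1) * Polynomial.X ^ l₀' with hp1
    have hroots : ∀ n : ℕ, p1.IsRoot ((n : ℚ) + 1) := by
      intro n
      have hn : ((n : ℚ) + 1) ≠ 0 := by positivity
      have hs := scale2 ((n : ℚ) + 1) hn 1 1
      rw [mul_one] at hs
      show p1.eval ((n : ℚ) + 1) = 0
      rw [hp1, Polynomial.eval_sub, Polynomial.eval_mul, Polynomial.eval_C, Polynomial.eval_pow,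
        Polynomial.eval_X, hev2, hs]
      ring
    have hinj : Function.Injective (fun n : ℕ => ((n : ℚ) + 1)) := by
      intro i j hij
      have : (i : ℚ) = (j : ℚ) := by simpa using hij
      exact_mod_cast this
    have hz : p1 = 0 := Polynomial.eq_zero_of_infinite_isRoot _
      (Set.infinite_of_injective_forall_mem hinj hroots)
    have h0 := congrArg (Polynomial.eval b) hz
    rw [hp1, Polynomial.eval_sub, Polynomial.eval_mul, Polynomial.eval_C, Polynomial.eval_pow,
      Polynomial.eval_X, hev2, Polynomial.eval_zero] at h0
    have := sub_eq_zero.mp h0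
    rw [this]; ring
  -- the full formula for r
  have formula : ∀ a b : ℚ, r a b = a ^ k₀' * (b ^ l₀' * r 1 1) := by
    intro a b
    calc r a b = r (a * 1) b := by rw [mul_one]
    _ = a ^ k₀' * r 1 b := full1 a 1 b
    _ = a ^ k₀' * (b ^ l₀' * r 1 1) := by rw [full2 b]
  set c : ℚ := (-1 : ℚ) ^ (k₀' + l₀') * r 1 1 with hcdef
  -- the key pointwise identity away from the degenerate locus
  have key : ∀ v : Fin 6 → ℚ, v 0 * v 3 - v 1 * v 2 ≠ 0 →
      eval v Q = c * eval v (clebschGordan k₀' l₀' m₀') := by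
    intro v hD
    set D : ℚ := v 0 * v 3 - v 1 * v 2 with hDdef
    set a : ℚ := (v 4 * v 3 - v 5 * v 2) / D with hadef
    set b : ℚ := (v 0 * v 5 - v 1 * v 4) / D with hbdef
    have hdet : Matrix.det ![![v 0 / D, v 1 / D], ![v 2, v 3]] = 1 := by
      refine (Matrix.det_fin_two _).trans ?_
      show v 0 / D * v 3 - v 1 / D * v 2 = 1
      field_simp [hDdef]
      exact hDdef.symm
    set γ : Matrix.SpecialLinearGroup (Fin 2) ℚ := ⟨![![v 0 / D, v 1 / D], ![v 2, v 3]], hdet⟩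
    have h := hpt γ ![D, 0, 0, 1, a * D, b]
    have hcγ : (γ : Matrix (Fin 2) (Fin 2) ℚ) = ![![v 0 / D, v 1 / D], ![v 2, v 3]] := rfl
    rw [hcγ] at h
    have hv : (![(![![v 0 / D, v 1 / D], ![v 2, v 3]] : Matrix (Fin 2) (Fin 2) ℚ) 0 0 * (![D, 0, 0, 1, a * D, b] : Fin 6 → ℚ) 0 + (![![v 0 / D, v 1 / D], ![v 2, v 3]] : Matrix (Fin 2) (Fin 2) ℚ) 1 0 * (![D, 0, 0, 1, a * D, b] : Fin 6 → ℚ) 1,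
        (![![v 0 / D, v 1 / D], ![v 2, v 3]] : Matrix (Fin 2) (Fin 2) ℚ) 0 1 * (![D, 0, 0, 1, a * D, b] : Fin 6 → ℚ) 0 + (![![v 0 / D, v 1 / D], ![v 2, v 3]] : Matrix (Fin 2) (Fin 2) ℚ) 1 1 * (![D, 0, 0, 1, a * D, b] : Fin 6 → ℚ) 1,
        (![![v 0 / D, v 1 / D], ![v 2, v 3]] : Matrix (Fin 2) (Fin 2) ℚ) 0 0 * (![D, 0, 0, 1, a * D, b] : Fin 6 → ℚ) 2 + (![![v 0 / D, v 1 / D], ![v 2, v 3]] : Matrix (Fin 2) (Fin 2) ℚ) 1 0 * (![D, 0, 0, 1, a * D, b] : Fin 6 → ℚ) 3,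
        (![![v 0 / D, v 1 / D], ![v 2, v 3]] : Matrix (Fin 2) (Fin 2) ℚ) 0 1 * (![D, 0, 0, 1, a * D, b] : Fin 6 → ℚ) 2 + (![![v 0 / D, v 1 / D], ![v 2, v 3]] : Matrix (Fin 2) (Fin 2) ℚ) 1 1 * (![D, 0, 0, 1, a * D, b] : Fin 6 → ℚ) 3,
        (![![v 0 / D, v 1 / D], ![v 2, v 3]] : Matrix (Fin 2) (Fin 2) ℚ) 0 0 * (![D, 0, 0, 1, a * D, b] : Fin 6 → ℚ) 4 + (![![v 0 / D, v 1 / D], ![v 2, v 3]] : Matrix (Fin 2) (Fin 2) ℚ) 1 0 * (![D, 0, 0, 1, a * D, b] : Fin 6 → ℚ) 5,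
        (![![v 0 / D, v 1 / D], ![v 2, v 3]] : Matrix (Fin 2) (Fin 2) ℚ) 0 1 * (![D, 0, 0, 1, a * D, b] : Fin 6 → ℚ) 4 + (![![v 0 / D, v 1 / D], ![v 2, v 3]] : Matrix (Fin 2) (Fin 2) ℚ) 1 1 * (![D, 0, 0, 1, a * D, b] : Fin 6 → ℚ) 5] : Fin 6 → ℚ)
        = v := by
      have hD' : v 0 * v 3 - v 1 * v 2 ≠ 0 := by rw [← hDdef]; exact hD
      funext i
      fin_cases i
      · show v 0 / D * D + v 2 * 0 = v 0
        field_simp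
        ring
      · show v 1 / D * D + v 3 * 0 = v 1
        field_simp
        ring
      · show v 0 / D * 0 + v 2 * 1 = v 2
        ring
      · show v 1 / D * 0 + v 3 * 1 = v 3
        ring
      · show v 0 / D * (a * D) + v 2 * b = v 4
        rw [hadef, hbdef, hDdef]
        field_simp
        ring
      · show v 1 / D * (a * D) + v 3 * b = v 5
        rw [hadef, hbdef, hDdef]
        field_simp
        ring
    rw [hv] at h
    -- h : eval v Q = eval ![D, 0, 0, 1, a*D, b] Q
    have h2 := CG.triHom_scale' hQ D 1 1 1 0 0 1 (a * D) b
    have hv2 : (![D * 1, D * 0, 1 * 0, 1 * 1, 1 * (a * D), 1 * b] : Fin 6 → ℚ)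
        = ![D, 0, 0, 1, a * D, b] := by
      funext i
      fin_cases i <;> norm_num
    rw [hv2] at h2
    have hrr : eval ![1, 0, 0, 1, a * D, b] Q = r (a * D) b := rfl
    rw [hrr] at h2
    have haD : a * D = -(v 2 * v 5 - v 3 * v 4) := by
      rw [hadef, div_mul_cancel₀ _ hD]; ring
    have hbD : b * D = -(v 4 * v 1 - v 5 * v 0) := by
      rw [hbdef, div_mul_cancel₀ _ hD]; ring
    have hevalP : eval v (clebschGordan k₀' l₀' m₀') =
        (v 2 * v 5 - v 3 * v 4) ^ k₀' * (v 4 * v 1 - v 5 * v 0) ^ l₀' *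
          (v 0 * v 3 - v 1 * v 2) ^ m₀' := by
      simp [clebschGordan]
    clear_value r D a b
    rw [h, h2, formula (a * D) b, hevalP, ← hDdef]
    have hk0 : k₀ = l₀' + m₀' := by omega
    calc D ^ k₀ * 1 ^ l₀ * 1 ^ m₀ * ((a * D) ^ k₀' * (b ^ l₀' * r 1 1))
        = (a * D) ^ k₀' * ((b * D) ^ l₀') * D ^ m₀' * r 1 1 := by
          rw [hk0, pow_add]; ring
      _ = (-(v 2 * v 5 - v 3 * v 4)) ^ k₀' * ((-(v 4 * v 1 - v 5 * v 0)) ^ l₀') * D ^ m₀' * r 1 1 := by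
          rw [haD, hbD]
      _ = ((-1) ^ (k₀' + l₀') * r 1 1) *
            ((v 2 * v 5 - v 3 * v 4) ^ k₀' * (v 4 * v 1 - v 5 * v 0) ^ l₀' * D ^ m₀') := by
          rw [neg_pow (v 2 * v 5 - v 3 * v 4) k₀', neg_pow (v 4 * v 1 - v 5 * v 0) l₀', pow_add]; ring
      _ = c * ((v 2 * v 5 - v 3 * v 4) ^ k₀' * (v 4 * v 1 - v 5 * v 0) ^ l₀' * D ^ m₀') := by
          rw [hcdef]
  -- conclude by density
  refine ⟨c, ?_⟩
  have hfun : ∀ v : Fin 6 → ℚ,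
      eval v ((X 0 * X 3 - X 1 * X 2) * (Q - c • clebschGordan k₀' l₀' m₀'))
        = eval v (0 : MvPolynomial (Fin 6) ℚ) := by
    intro v
    rw [map_mul, map_zero]
    by_cases hD : v 0 * v 3 - v 1 * v 2 = 0
    · have h1 : eval v ((X 0 * X 3 - X 1 * X 2 : MvPolynomial (Fin 6) ℚ)) = 0 := by
        rw [map_sub, map_mul, map_mul, eval_X, eval_X, eval_X, eval_X]
        exact hD
      rw [h1, zero_mul]
    · have h := key v hD
      have h2 : eval v (Q - c • clebschGordan k₀' l₀' m₀') = 0 := by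
        rw [map_sub, smul_eval, h, sub_self]
      rw [h2, mul_zero]
  have hzero : (X 0 * X 3 - X 1 * X 2 : MvPolynomial (Fin 6) ℚ) *
      (Q - c • clebschGordan k₀' l₀' m₀') = 0 := MvPolynomial.funext hfun
  rcases mul_eq_zero.mp hzero with h | h
  · exfalso
    have := congrArg (eval ![1, 0, 0, 1, 0, 0]) h
    rw [map_sub, map_mul, map_mul, eval_X, eval_X, eval_X, eval_X, map_zero] at this
    norm_num at this
    exact one_ne_zero (α := ℚ) this
  · exact sub_eq_zero.mp h
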